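/- Let g ∈ ℝ and ε ∈ ℝ. Suppose A : ℝ → ℝ is four times continuously differentiable and B : ℝ → ℂ is twice continuously differentiable, and for all x ∈ ℝ they satisfy A''''(x) = A(x)(1 − A(x)² − g|B(x)|²) and B''(x) = ε² B(x)(−1 + g A(x)² + |B(x)|²). Then the function W_g(x) = 2ε² A'(x)A'''(x) − ε² A''(x)² − |B'(x)|² + (ε²/2)(A(x)² + |B(x)|² − 1)² + ε²(g − 1) A(x)² |B(x)|² is constant on ℝ. -/

import Mathlib

open Filter


private lemma step_deriv' {F : Type*} [NormedAddCommGroup F] [NormedSpace ℝ F]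
    (n : ℕ) (f : ℝ → F) (hf : ContDiff ℝ (n+1 : ℕ) f) :
    Differentiable ℝ f ∧ ContDiff ℝ (n : ℕ) (deriv f) := by
  rw [show ((n+1 : ℕ) : WithTop ℕ∞) = (n : WithTop ℕ∞) + 1 by push_cast; ring] at hf
  obtain ⟨h1, _, h3⟩ := contDiff_succ_iff_deriv.mp hf
  exact ⟨h1, h3⟩


/-- The first integral `W_g` of the complex reduced system
`A'''' = A(1 − A² − g|B|²)`, `B'' = ε² B(−1 + g A² + |B|²)`
is constant along any solution. -/
theorem first_integral_Wg_constant (g ε : ℝ) (A : ℝ → ℝ) (B : ℝ → ℂ)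
    (hA : ContDiff ℝ 4 A) (hB : ContDiff ℝ 2 B)
    (hAeq : ∀ x : ℝ, iteratedDeriv 4 A x
      = A x * (1 - (A x) ^ 2 - g * ‖B x‖ ^ 2))
    (hBeq : ∀ x : ℝ, iteratedDeriv 2 B x
      = (ε : ℂ) ^ 2 * B x * (-1 + (g : ℂ) * (A x : ℂ) ^ 2 + (‖B x‖ : ℂ) ^ 2)) :
    ∃ c : ℝ, ∀ x : ℝ,
      2 * ε ^ 2 * deriv A x * iteratedDeriv 3 A x
        - ε ^ 2 * (iteratedDeriv 2 A x) ^ 2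
        - ‖deriv B x‖ ^ 2
        + ε ^ 2 / 2 * ((A x) ^ 2 + ‖B x‖ ^ 2 - 1) ^ 2
        + ε ^ 2 * (g - 1) * (A x) ^ 2 * ‖B x‖ ^ 2 = c := by
  have hA' : ContDiff ℝ ((3+1 : ℕ)) A := by exact_mod_cast hA
  obtain ⟨hA0d, hA1c⟩ := step_deriv' 3 A hA'
  obtain ⟨hA1d, hA2c⟩ := step_deriv' 2 _ hA1c
  obtain ⟨hA2d, hA3c⟩ := step_deriv' 1 _ hA2c
  obtain ⟨hA3d, _⟩ := step_deriv' 0 _ hA3c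
  have hB' : ContDiff ℝ ((1+1 : ℕ)) B := by exact_mod_cast hB
  obtain ⟨hB0d, hB1c⟩ := step_deriv' 1 B hB'
  obtain ⟨hB1d, _⟩ := step_deriv' 0 _ hB1c
  have e2 : iteratedDeriv 2 A = deriv (deriv A) := by
    rw [show (2:ℕ) = 1+1 from rfl, iteratedDeriv_succ, iteratedDeriv_one]
  have e3 : iteratedDeriv 3 A = deriv (deriv (deriv A)) := by
    rw [show (3:ℕ) = 2+1 from rfl, iteratedDeriv_succ, e2]
  have e4 : iteratedDeriv 4 A = deriv (deriv (deriv (deriv A))) := by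
    rw [show (4:ℕ) = 3+1 from rfl, iteratedDeriv_succ, e3]
  have e2B : iteratedDeriv 2 B = deriv (deriv B) := by
    rw [show (2:ℕ) = 1+1 from rfl, iteratedDeriv_succ, iteratedDeriv_one]
  have habsz : ∀ z : ℂ, ‖z‖ ^ 2 = z.re ^ 2 + z.im ^ 2 := fun z => by
    rw [Complex.sq_norm, Complex.normSq_apply]; ring
  have hDF : ∀ x : ℝ, HasDerivAt (fun t =>
      2*ε^2 * (deriv A t * deriv (deriv (deriv A)) t)
      - ε^2 * (deriv (deriv A) t)^2
      - ((deriv B t).re^2 + (deriv B t).im^2)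
      + ε^2/2 * ((A t)^2 + ((B t).re^2 + (B t).im^2) - 1)^2
      + ε^2*(g-1) * ((A t)^2 * ((B t).re^2 + (B t).im^2))) 0 x := by
    intro x
    have hdA : HasDerivAt A (deriv A x) x := (hA0d x).hasDerivAt
    have hdA1 : HasDerivAt (deriv A) (deriv (deriv A) x) x := (hA1d x).hasDerivAt
    have hdA2 : HasDerivAt (deriv (deriv A)) (deriv (deriv (deriv A)) x) x := (hA2d x).hasDerivAt
    have hdA3 : HasDerivAt (deriv (deriv (deriv A))) (deriv (deriv (deriv (deriv A))) x) x :=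
      (hA3d x).hasDerivAt
    have hdB : HasDerivAt B (deriv B x) x := (hB0d x).hasDerivAt
    have hdB1 : HasDerivAt (deriv B) (deriv (deriv B) x) x := (hB1d x).hasDerivAt
    have hdu : HasDerivAt (fun t => (B t).re) (deriv B x).re x :=
      Complex.reCLM.hasFDerivAt.comp_hasDerivAt x hdB
    have hdv : HasDerivAt (fun t => (B t).im) (deriv B x).im x :=
      Complex.imCLM.hasFDerivAt.comp_hasDerivAt x hdB
    have hdu1 : HasDerivAt (fun t => (deriv B t).re) (deriv (deriv B) x).re x :=
      Complex.reCLM.hasFDerivAt.comp_hasDerivAt x hdB1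
    have hdv1 : HasDerivAt (fun t => (deriv B t).im) (deriv (deriv B) x).im x :=
      Complex.imCLM.hasFDerivAt.comp_hasDerivAt x hdB1
    have hA4 : deriv (deriv (deriv (deriv A))) x
        = A x * (1 - A x ^ 2 - g * ((B x).re ^ 2 + (B x).im ^ 2)) := by
      rw [← e4, hAeq x, habsz (B x)]
    have hB2 : deriv (deriv B) x
        = ((ε^2 * (-1 + g * (A x)^2 + ((B x).re^2 + (B x).im^2)) : ℝ) : ℂ) * B x := by
      rw [← e2B, hBeq x, ← habsz (B x)]; push_cast; ring
    have hB2re : (deriv (deriv B) x).re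
        = ε^2 * (-1 + g * (A x)^2 + ((B x).re^2 + (B x).im^2)) * (B x).re := by
      rw [hB2, Complex.re_ofReal_mul]
    have hB2im : (deriv (deriv B) x).im
        = ε^2 * (-1 + g * (A x)^2 + ((B x).re^2 + (B x).im^2)) * (B x).im := by
      rw [hB2, Complex.im_ofReal_mul]
    have H0 := (((((hdA1.mul hdA3).const_mul (2*ε^2)).sub
        ((hdA2.pow 2).const_mul (ε^2))).sub
        ((hdu1.pow 2).add (hdv1.pow 2))).add
        (((((hdA.pow 2).add ((hdu.pow 2).add (hdv.pow 2))).sub_const 1).pow 2).const_mul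
          (ε^2/2))).add
        (((hdA.pow 2).mul ((hdu.pow 2).add (hdv.pow 2))).const_mul (ε^2*(g-1)))
    rw [hA4, hB2re, hB2im] at H0
    refine H0.congr_deriv ?_
    simp only [Pi.add_apply, Pi.pow_apply, Nat.cast_ofNat]
    ring
  have hdiff : Differentiable ℝ (fun t =>
      2*ε^2 * (deriv A t * deriv (deriv (deriv A)) t)
      - ε^2 * (deriv (deriv A) t)^2
      - ((deriv B t).re^2 + (deriv B t).im^2)
      + ε^2/2 * ((A t)^2 + ((B t).re^2 + (B t).im^2) - 1)^2
      + ε^2*(g-1) * ((A t)^2 * ((B t).re^2 + (B t).im^2))) := fun x => (hDF x).differentiableAt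
  have hconst := is_const_of_deriv_eq_zero hdiff (fun x => (hDF x).deriv)
  refine ⟨2*ε^2 * (deriv A 0 * deriv (deriv (deriv A)) 0)
      - ε^2 * (deriv (deriv A) 0)^2
      - ((deriv B 0).re^2 + (deriv B 0).im^2)
      + ε^2/2 * ((A 0)^2 + ((B 0).re^2 + (B 0).im^2) - 1)^2
      + ε^2*(g-1) * ((A 0)^2 * ((B 0).re^2 + (B 0).im^2)), fun x => ?_⟩
  have := hconst x 0
  rw [e2, e3, habsz (B x), habsz (deriv B x)]
  rw [← this]
  ring
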